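/- arXiv:1910.05394 — 4 statements merged into one kernel-verified Lean document; each statement's English description precedes it below -/
import Mathlib

section
/- For λ : ℝ → (0,∞) twice differentiable and t fixed, ⟨∂ₜₜ(Q₁(R·something)) evaluated as ∂ₜ²[Q₁(r/λ(t))] at r = Rλ(t), tested against φ₀(R)⟩ in L²(R dR) equals (2/3)·λ''(t)/λ(t). Precisely: ∫₀^∞ (∂ₜ²[Q₁(r/λ(t))])|_{r=Rλ(t)} · φ₀(R) · R dR = (2λ''(t))/(3λ(t)). -/
open MeasureTheory Filter Set

noncomputable def Q1 (r : ℝ) : ℝ := (1 - r^2) / (1 + r^2)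

noncomputable def phi0 (r : ℝ) : ℝ := r^2 / (1 + r^2)^2

lemma hQ1 (x : ℝ) : HasDerivAt Q1 (-4*x/(1+x^2)^2) x := by
  have h1 : HasDerivAt (fun y : ℝ => 1 - y^2) (-(2*x)) x := by
    simpa using ((hasDerivAt_pow 2 x).const_sub 1)
  have h2 : HasDerivAt (fun y : ℝ => 1 + y^2) (2*x) x := by
    simpa using ((hasDerivAt_pow 2 x).const_add 1)
  have h := h1.div h2 (by positivity)
  refine h.congr_deriv ?_
  have : (1:ℝ)+x^2 ≠ 0 := by positivity
  field_simp
  ring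

lemma key_second_deriv (l : ℝ → ℝ) (hpos : ∀ t, 0 < l t) (hd1 : Differentiable ℝ l)
    (hd2 : Differentiable ℝ (deriv l)) (t : ℝ) (R : ℝ) :
    deriv (deriv (fun s => Q1 (R * l t / l s))) t * phi0 R * R =
      ((deriv l t)^2/(l t)^2) * (4*R^7/(1+R^2)^5)
      - 12*((deriv l t)^2/(l t)^2) * (R^5/(1+R^2)^5)
      + (deriv (deriv l) t / l t) * (4*R^5/(1+R^2)^4) := by
  set c := R * l t with hc
  have hlne : ∀ s, l s ≠ 0 := fun s => (hpos s).ne'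
  set E : ℝ → ℝ := fun s => 4*c^2*(deriv l s * l s) / ((l s)^2 + c^2)^2 with hE
  have hfd : ∀ s, HasDerivAt (fun s' => Q1 (c / l s')) (E s) s := by
    intro s
    have hg : HasDerivAt (fun s' => c / l s') (c * (-deriv l s / (l s)^2)) s := by
      have h := ((hd1 s).hasDerivAt.inv (hlne s)).const_mul c
      simpa [div_eq_mul_inv] using h
    have h := (hQ1 (c / l s)).comp s hg
    refine h.congr_deriv ?_
    have h1 : (1:ℝ) + (c / l s)^2 ≠ 0 := by positivity
    have h2 : l s ≠ 0 := hlne s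
    simp only [hE]
    field_simp
  have hdf : deriv (fun s => Q1 (R * l t / l s)) = E := by
    funext s
    exact (hfd s).deriv
  have hN : HasDerivAt (fun s => 4*c^2*(deriv l s * l s))
      (4*c^2*(deriv (deriv l) t * l t + deriv l t * deriv l t)) t :=
    ((hd2 t).hasDerivAt.mul (hd1 t).hasDerivAt).const_mul (4*c^2)
  have hD : HasDerivAt (fun s => ((l s)^2 + c^2)^2)
      ((2:ℕ)*((l t)^2+c^2)^1*((2:ℕ)*(l t)^1*deriv l t)) t :=
    (((hd1 t).hasDerivAt.pow 2).add_const (c^2)).pow 2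
  have hDpos : (0:ℝ) < (l t)^2 + c^2 := by
    have := hpos t; positivity
  have hEd : HasDerivAt E
      ((4*c^2*(deriv (deriv l) t * l t + deriv l t * deriv l t) * ((l t)^2+c^2)^2
        - 4*c^2*(deriv l t * l t) * ((2:ℕ)*((l t)^2+c^2)^1*((2:ℕ)*(l t)^1*deriv l t)))
        / (((l t)^2+c^2)^2)^2) t :=
    hN.div hD (by positivity)
  rw [hdf, hEd.deriv]
  have h1 : (1:ℝ) + R^2 ≠ 0 := by positivity
  have h2 : l t ≠ 0 := hlne t
  have h3 : (l t)^2 + c^2 ≠ 0 := ne_of_gt hDpos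
  simp only [phi0, hc]
  push_cast
  field_simp
  ring

noncomputable def P1 (x : ℝ) : ℝ :=
  -2*(1+x^2)⁻¹ + 3*((1+x^2)⁻¹)^2 - 2*((1+x^2)⁻¹)^3 + (1/2)*((1+x^2)⁻¹)^4
noncomputable def P2 (x : ℝ) : ℝ :=
  -(1/4)*((1+x^2)⁻¹)^2 + (1/3)*((1+x^2)⁻¹)^3 - (1/8)*((1+x^2)⁻¹)^4
noncomputable def P3 (x : ℝ) : ℝ :=
  -2*(1+x^2)⁻¹ + 2*((1+x^2)⁻¹)^2 - (2/3)*((1+x^2)⁻¹)^3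

lemma hw (x : ℝ) : HasDerivAt (fun y : ℝ => (1+y^2)⁻¹) (-(2*x)/(1+x^2)^2) x := by
  have h2 : HasDerivAt (fun y : ℝ => 1 + y^2) (2*x) x := by
    simpa using ((hasDerivAt_pow 2 x).const_add 1)
  exact h2.inv (by positivity)

lemma hP1 (x : ℝ) : HasDerivAt P1 (4*x^7/(1+x^2)^5) x := by
  have h := ((((hw x).const_mul (-2)).add (((hw x).pow 2).const_mul 3)).sub
      (((hw x).pow 3).const_mul 2)).add (((hw x).pow 4).const_mul (1/2))
  have hne : (1:ℝ)+x^2 ≠ 0 := by positivity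
  refine h.congr_deriv ?_
  norm_num
  field_simp
  ring

lemma hP2 (x : ℝ) : HasDerivAt P2 (x^5/(1+x^2)^5) x := by
  have h := ((((hw x).pow 2).const_mul (-(1/4))).add (((hw x).pow 3).const_mul (1/3))).sub
      (((hw x).pow 4).const_mul (1/8))
  have hne : (1:ℝ)+x^2 ≠ 0 := by positivity
  refine h.congr_deriv ?_
  norm_num
  field_simp
  ring

lemma hP3 (x : ℝ) : HasDerivAt P3 (4*x^5/(1+x^2)^4) x := by
  have h := (((hw x).const_mul (-2)).add (((hw x).pow 2).const_mul 2)).sub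
      (((hw x).pow 3).const_mul (2/3))
  have hne : (1:ℝ)+x^2 ≠ 0 := by positivity
  refine h.congr_deriv ?_
  norm_num
  field_simp
  ring

lemma tendsto_w : Tendsto (fun x : ℝ => (1+x^2)⁻¹) atTop (nhds 0) := by
  apply Tendsto.inv_tendsto_atTop
  exact tendsto_atTop_add_const_left _ 1 (tendsto_pow_atTop two_ne_zero)

lemma tP1 : Tendsto P1 atTop (nhds 0) := by
  have h := ((tendsto_w.const_mul (-2)).add ((tendsto_w.pow 2).const_mul 3)).sub
      ((tendsto_w.pow 3).const_mul 2) |>.add ((tendsto_w.pow 4).const_mul (1/2))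
  norm_num at h
  refine h.congr fun x => ?_
  simp only [P1, inv_pow]
  ring

lemma tP2 : Tendsto P2 atTop (nhds 0) := by
  have h := (((tendsto_w.pow 2).const_mul (-(1/4))).add ((tendsto_w.pow 3).const_mul (1/3))).sub
      ((tendsto_w.pow 4).const_mul (1/8))
  norm_num at h
  refine h.congr fun x => ?_
  simp only [P2, inv_pow]
  ring

lemma tP3 : Tendsto P3 atTop (nhds 0) := by
  have h := ((tendsto_w.const_mul (-2)).add ((tendsto_w.pow 2).const_mul 2)).sub
      ((tendsto_w.pow 3).const_mul (2/3))
  norm_num at h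
  refine h.congr fun x => ?_
  simp only [P3, inv_pow]
  ring

lemma nn1 : ∀ x ∈ Ioi (0:ℝ), 0 ≤ 4*x^7/(1+x^2)^5 := fun x hx => by
  have : (0:ℝ) < x := hx; positivity

lemma nn2 : ∀ x ∈ Ioi (0:ℝ), 0 ≤ x^5/(1+x^2)^5 := fun x hx => by
  have : (0:ℝ) < x := hx; positivity

lemma nn3 : ∀ x ∈ Ioi (0:ℝ), 0 ≤ 4*x^5/(1+x^2)^4 := fun x hx => by
  have : (0:ℝ) < x := hx; positivity

lemma int1 : ∫ x in Ioi (0:ℝ), 4*x^7/(1+x^2)^5 = 1/2 := by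
  have h := integral_Ioi_of_hasDerivAt_of_nonneg' (g := P1) (a := 0)
    (fun x _ => hP1 x) nn1 tP1
  rw [h]; norm_num [P1]

lemma int2 : ∫ x in Ioi (0:ℝ), x^5/(1+x^2)^5 = 1/24 := by
  have h := integral_Ioi_of_hasDerivAt_of_nonneg' (g := P2) (a := 0)
    (fun x _ => hP2 x) nn2 tP2
  rw [h]; norm_num [P2]

lemma int3 : ∫ x in Ioi (0:ℝ), 4*x^5/(1+x^2)^4 = 2/3 := by
  have h := integral_Ioi_of_hasDerivAt_of_nonneg' (g := P3) (a := 0)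
    (fun x _ => hP3 x) nn3 tP3
  rw [h]; norm_num [P3]

lemma i1 : IntegrableOn (fun x => 4*x^7/(1+x^2)^5) (Ioi (0:ℝ)) :=
  integrableOn_Ioi_deriv_of_nonneg' (fun x _ => hP1 x) nn1 tP1

lemma i2 : IntegrableOn (fun x => x^5/(1+x^2)^5) (Ioi (0:ℝ)) :=
  integrableOn_Ioi_deriv_of_nonneg' (fun x _ => hP2 x) nn2 tP2

lemma i3 : IntegrableOn (fun x => 4*x^5/(1+x^2)^4) (Ioi (0:ℝ)) :=
  integrableOn_Ioi_deriv_of_nonneg' (fun x _ => hP3 x) nn3 tP3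

theorem soliton_time_derivative_inner_product (l : ℝ → ℝ)
    (hpos : ∀ t, 0 < l t)
    (hd1 : Differentiable ℝ l) (hd2 : Differentiable ℝ (deriv l)) (t : ℝ) :
    ∫ R in Set.Ioi (0:ℝ),
        (deriv (deriv (fun s => Q1 (R * l t / l s))) t) * phi0 R * R
      = 2 * deriv (deriv l) t / (3 * l t) := by
  set A := (deriv l t)^2/(l t)^2 with hA
  set B := deriv (deriv l) t / l t with hB
  have hpt : EqOn (fun R : ℝ => deriv (deriv (fun s => Q1 (R * l t / l s))) t * phi0 R * R)
      (fun R : ℝ => A * (4*R^7/(1+R^2)^5) - 12*A * (R^5/(1+R^2)^5) + B * (4*R^5/(1+R^2)^4))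
      (Ioi 0) := fun R _ => key_second_deriv l hpos hd1 hd2 t R
  rw [setIntegral_congr_fun measurableSet_Ioi hpt]
  have hsub : IntegrableOn
      (fun x : ℝ => A * (4*x^7/(1+x^2)^5) - 12*A * (x^5/(1+x^2)^5)) (Ioi 0) :=
    (i1.const_mul A).sub (i2.const_mul (12*A))
  have hmul1 : IntegrableOn (fun x : ℝ => A * (4*x^7/(1+x^2)^5)) (Ioi 0) := i1.const_mul A
  have hmul2 : IntegrableOn (fun x : ℝ => 12*A * (x^5/(1+x^2)^5)) (Ioi 0) := i2.const_mul (12*A)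
  have hmul3 : IntegrableOn (fun x : ℝ => B * (4*x^5/(1+x^2)^4)) (Ioi 0) := i3.const_mul B
  rw [integral_add hsub hmul3, integral_sub hmul1 hmul2,
    integral_const_mul, integral_const_mul, integral_const_mul, int1, int2, int3]
  have h2 : l t ≠ 0 := (hpos t).ne'
  rw [hB]
  field_simp
  ring
end

section
/- For all λ, ξ > 0: (24/λ²) ∫₀^∞ R³ J₂(ξRλ)/(1+R²)⁴ dR = (ξ³λ/2) K₁(ξλ), where J₂ is the Bessel function of the first kind of order 2 and K₁ is the modified Bessel function of the second kind of order 1. -/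
open MeasureTheory

noncomputable def besselJ (n : ℕ) (x : ℝ) : ℝ :=
  (1 / Real.pi) * ∫ θ in (0:ℝ)..Real.pi, Real.cos (n * θ - x * Real.sin θ)

noncomputable def besselK1 (x : ℝ) : ℝ :=
  ∫ t in Set.Ioi (0:ℝ), Real.exp (-x * Real.cosh t) * Real.cosh t

open Real Set intervalIntegral

lemma besselJ_two_eq (x : ℝ) :
    besselJ 2 x = (1 / Real.pi) * ∫ θ in (0:ℝ)..Real.pi, Real.cos (2 * θ - x * Real.sin θ) := by
  unfold besselJ
  norm_num

lemma besselJ2_cont : Continuous (fun x : ℝ => (1 / Real.pi) * ∫ θ in (0:ℝ)..Real.pi, Real.cos (2 * θ - x * Real.sin θ)) := by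
  apply Continuous.mul continuous_const
  exact intervalIntegral.continuous_parametric_intervalIntegral_of_continuous' (by fun_prop) 0 Real.pi

lemma abs_besselJ2_le (x : ℝ) : |(1 / Real.pi) * ∫ θ in (0:ℝ)..Real.pi, Real.cos (2 * θ - x * Real.sin θ)| ≤ 1 := by
  rw [abs_mul]
  have h : ‖∫ θ in (0:ℝ)..Real.pi, Real.cos (2 * θ - x * Real.sin θ)‖ ≤ 1 * |Real.pi - 0| := by
    apply intervalIntegral.norm_integral_le_of_norm_le_const
    intro θ _
    rw [Real.norm_eq_abs]
    exact Real.abs_cos_le_one _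
  have hπ : (0:ℝ) < Real.pi := Real.pi_pos
  rw [Real.norm_eq_abs, sub_zero, abs_of_pos hπ, one_mul] at h
  rw [abs_of_pos (by positivity : (0:ℝ) < 1/Real.pi)]
  calc 1/Real.pi * |∫ θ in (0:ℝ)..Real.pi, Real.cos (2 * θ - x * Real.sin θ)|
      ≤ 1/Real.pi * Real.pi := by
        exact mul_le_mul_of_nonneg_left h (by positivity)
    _ = 1 := by field_simp

lemma sin_pow_even_integral (m : ℕ) :
    ∫ θ in (0:ℝ)..Real.pi, Real.sin θ ^ (2*m)
      = Real.pi * (2*m).factorial / (4^m * (m.factorial)^2) := by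
  induction m with
  | zero => simp
  | succ k ih =>
    have h := integral_sin_pow (a := 0) (b := Real.pi) (2*k)
    rw [Real.sin_zero, Real.sin_pi] at h
    rw [show 2*(k+1) = 2*k+2 by ring, h, ih]
    simp only [Nat.factorial_succ]
    rw [zero_pow (by omega : 2*k+1 ≠ 0)]
    have hk : ((k:ℝ)+1) ≠ 0 := by positivity
    have hf : ((k.factorial : ℝ)) ≠ 0 := by positivity
    have h4 : ((4:ℝ)^k) ≠ 0 := by positivity
    push_cast
    field_simp
    ring

lemma cos2_sin_pow_integral (m : ℕ) :
    ∫ θ in (0:ℝ)..Real.pi, Real.cos (2*θ) * Real.sin θ ^ (2*m)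
      = -(m:ℝ)/(m+1) * (Real.pi * (2*m).factorial / (4^m * (m.factorial)^2)) := by
  have heq : ∀ θ : ℝ, Real.cos (2*θ) * Real.sin θ ^ (2*m)
      = Real.sin θ ^ (2*m) - 2 * Real.sin θ ^ (2*m+2) := by
    intro θ
    rw [Real.cos_two_mul', Real.cos_sq']
    ring
  simp_rw [heq]
  rw [intervalIntegral.integral_sub (by apply Continuous.intervalIntegrable; fun_prop)
      (by apply Continuous.intervalIntegrable; fun_prop),
    intervalIntegral.integral_const_mul]
  have h := integral_sin_pow (a := 0) (b := Real.pi) (2*m)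
  rw [Real.sin_zero, Real.sin_pi, zero_pow (by omega : 2*m+1 ≠ 0)] at h
  rw [h, sin_pow_even_integral]
  have hm : ((m:ℝ)+1) ≠ 0 := by positivity
  have hf : ((m.factorial : ℝ)) ≠ 0 := by positivity
  have h4 : ((4:ℝ)^m) ≠ 0 := by positivity
  push_cast
  field_simp
  ring

lemma sin2_sin_integral (x : ℝ) :
    ∫ θ in (0:ℝ)..Real.pi, Real.sin (2*θ) * Real.sin (x * Real.sin θ) = 0 := by
  set g : ℝ → ℝ := fun θ => Real.sin (2*θ) * Real.sin (x * Real.sin θ) with hg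
  have h := intervalIntegral.integral_comp_sub_left (a := 0) (b := Real.pi) g Real.pi
  simp only [sub_zero, sub_self] at h
  have h2 : ∀ θ : ℝ, g (Real.pi - θ) = - g θ := by
    intro θ
    simp only [hg]
    rw [Real.sin_pi_sub, mul_sub, Real.sin_sub]
    simp [Real.sin_two_pi, Real.cos_two_pi]
  simp_rw [h2] at h
  rw [intervalIntegral.integral_neg] at h
  linarith

lemma summable_aux (c : ℝ) : Summable (fun m : ℕ => c ^ (2*m) / (2*m).factorial) := by
  have hinj : Function.Injective (fun m : ℕ => 2*m) := fun a b hab => by dsimp at hab; omega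
  have h := (Real.summable_pow_div_factorial c).comp_injective hinj
  exact h

set_option maxHeartbeats 2000000 in
lemma besselJ2_series (x : ℝ) :
    (1 / Real.pi) * ∫ θ in (0:ℝ)..Real.pi, Real.cos (2 * θ - x * Real.sin θ)
      = ∑' k : ℕ, (-1)^k * (x/2)^(2*k+2) / ((k.factorial : ℝ) * ((k+2).factorial)) := by
  have hπ : (0:ℝ) < Real.pi := Real.pi_pos
  -- Step 1: split the cosine
  have hsplit : ∀ θ : ℝ, Real.cos (2*θ - x*Real.sin θ)
      = Real.cos (2*θ) * Real.cos (x*Real.sin θ) + Real.sin (2*θ) * Real.sin (x*Real.sin θ) := by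
    intro θ; rw [Real.cos_sub]
  simp_rw [hsplit]
  rw [intervalIntegral.integral_add (by apply Continuous.intervalIntegrable; fun_prop)
      (by apply Continuous.intervalIntegrable; fun_prop), sin2_sin_integral, add_zero]
  -- Step 2: expand cos (x sin θ) as a series and swap
  set F : ℕ → ℝ → ℝ := fun m θ => Real.cos (2*θ) * ((-1)^m * (x*Real.sin θ)^(2*m) / (2*m).factorial) with hF
  have hpt : ∀ θ : ℝ, Real.cos (2*θ) * Real.cos (x*Real.sin θ) = ∑' m : ℕ, F m θ := by
    intro θ
    rw [Real.cos_eq_tsum (x * Real.sin θ), ← tsum_mul_left]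
  have hIoc : ∫ θ in (0:ℝ)..Real.pi, Real.cos (2*θ) * Real.cos (x*Real.sin θ)
      = ∫ θ in Set.Ioc (0:ℝ) Real.pi, Real.cos (2*θ) * Real.cos (x*Real.sin θ) := by
    rw [intervalIntegral.integral_of_le hπ.le]
  have hFint : ∀ m : ℕ, Integrable (F m) (volume.restrict (Set.Ioc 0 Real.pi)) := by
    intro m
    apply Continuous.integrableOn_Ioc
    fun_prop
  have hFnorm : ∀ m : ℕ, (∫ θ in Set.Ioc (0:ℝ) Real.pi, ‖F m θ‖)
      ≤ Real.pi * (|x|^(2*m) / (2*m).factorial) := by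
    intro m
    have hb : ∀ θ ∈ Set.Ioc (0:ℝ) Real.pi, ‖F m θ‖ ≤ |x|^(2*m) / (2*m).factorial := by
      intro θ _
      have hxs : |x * Real.sin θ| ≤ |x| := by
        rw [abs_mul]
        calc |x| * |Real.sin θ| ≤ |x| * 1 :=
              mul_le_mul_of_nonneg_left (Real.abs_sin_le_one θ) (abs_nonneg x)
          _ = |x| := mul_one _
      have key : ‖F m θ‖ = |Real.cos (2*θ)| * (|x * Real.sin θ|^(2*m) / ((2*m).factorial:ℝ)) := by
        simp only [hF, Real.norm_eq_abs]
        rw [abs_mul, abs_div, abs_mul, abs_pow, abs_pow, abs_neg, abs_one, one_pow, one_mul,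
          Nat.abs_cast]
      rw [key]
      calc |Real.cos (2*θ)| * (|x * Real.sin θ|^(2*m) / ((2*m).factorial:ℝ))
          ≤ 1 * (|x|^(2*m) / ((2*m).factorial:ℝ)) := by
            gcongr
            all_goals first
              | exact Real.abs_cos_le_one _
              | exact hxs
              | positivity
        _ = |x|^(2*m) / ((2*m).factorial:ℝ) := one_mul _
    calc (∫ θ in Set.Ioc (0:ℝ) Real.pi, ‖F m θ‖)
        ≤ ∫ _θ in Set.Ioc (0:ℝ) Real.pi, (|x|^(2*m) / ((2*m).factorial:ℝ)) := by
          apply MeasureTheory.setIntegral_mono_on (hFint m).norm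
            (integrableOn_const measure_Ioc_lt_top.ne) measurableSet_Ioc hb
      _ = Real.pi * (|x|^(2*m) / (2*m).factorial) := by
          rw [MeasureTheory.setIntegral_const, measureReal_def, Real.volume_Ioc,
            ENNReal.toReal_ofReal (by linarith), smul_eq_mul, sub_zero]
  have hsum : Summable (fun m : ℕ => ∫ θ in Set.Ioc (0:ℝ) Real.pi, ‖F m θ‖) := by
    apply Summable.of_nonneg_of_le (fun m => integral_nonneg (fun θ => norm_nonneg _)) hFnorm
    exact (summable_aux |x|).mul_left Real.pi
  have hswap := MeasureTheory.integral_tsum_of_summable_integral_norm hFint hsum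
  have hterm : ∀ m : ℕ, (∫ θ in Set.Ioc (0:ℝ) Real.pi, F m θ)
      = ((-1:ℝ)^m * x^(2*m) / (2*m).factorial)
        * (-(m:ℝ)/(m+1) * (Real.pi * (2*m).factorial / (4^m * (m.factorial)^2))) := by
    intro m
    rw [← intervalIntegral.integral_of_le hπ.le]
    have heq : ∀ θ : ℝ, F m θ
        = ((-1:ℝ)^m * x^(2*m) / (2*m).factorial) * (Real.cos (2*θ) * Real.sin θ^(2*m)) := by
      intro θ
      simp only [hF]
      rw [mul_pow]
      ring
    simp_rw [heq]
    rw [intervalIntegral.integral_const_mul, cos2_sin_pow_integral]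
  rw [hIoc]
  calc (1 / Real.pi) * ∫ θ in Set.Ioc (0:ℝ) Real.pi, Real.cos (2*θ) * Real.cos (x*Real.sin θ)
      = (1 / Real.pi) * ∫ θ in Set.Ioc (0:ℝ) Real.pi, ∑' m : ℕ, F m θ := by
        congr 1
        exact setIntegral_congr_fun measurableSet_Ioc (fun θ _ => hpt θ)
    _ = (1 / Real.pi) * ∑' m : ℕ, ∫ θ in Set.Ioc (0:ℝ) Real.pi, F m θ := by rw [hswap]
    _ = ∑' m : ℕ, (1 / Real.pi) * ∫ θ in Set.Ioc (0:ℝ) Real.pi, F m θ := by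
        rw [tsum_mul_left]
    _ = ∑' m : ℕ, (-((-1:ℝ)^m * (m:ℝ) * x^(2*m) / (((m:ℝ)+1) * 4^m * ((m.factorial):ℝ)^2))) := by
        apply tsum_congr
        intro m
        rw [hterm m]
        have hm : ((m:ℝ)+1) ≠ 0 := by positivity
        have hf : ((m.factorial : ℝ)) ≠ 0 := by positivity
        have hf2 : (((2*m).factorial : ℝ)) ≠ 0 := by positivity
        have h4 : ((4:ℝ)^m) ≠ 0 := by positivity
        have hp : Real.pi ≠ 0 := ne_of_gt hπ
        field_simp
    _ = ∑' k : ℕ, (-1)^k * (x/2)^(2*k+2) / ((k.factorial : ℝ) * ((k+2).factorial)) := by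
        set g : ℕ → ℝ := fun m => -((-1:ℝ)^m * (m:ℝ) * x^(2*m) / (((m:ℝ)+1) * 4^m * ((m.factorial):ℝ)^2)) with hg
        have hbound : ∀ m : ℕ, |g m| ≤ (x^2/4)^m / (m.factorial : ℝ) := by
          intro m
          have hx2 : x^(2*m) = (x^2)^m := by rw [← pow_mul]
          have habs : |g m| = ((m:ℝ) * (x^2)^m) / (((m:ℝ)+1) * 4^m * ((m.factorial):ℝ)^2) := by
            rw [hg]
            show |(-((-1:ℝ)^m * (m:ℝ) * x^(2*m) / (((m:ℝ)+1) * 4^m * ((m.factorial):ℝ)^2)))| = _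
            rw [abs_neg, abs_div]
            congr 1
            · rw [abs_mul, abs_mul, abs_pow, abs_neg, abs_one, one_pow, one_mul, Nat.abs_cast,
                hx2, abs_pow, abs_sq]
            · rw [abs_of_pos (by positivity)]
          rw [habs, div_pow, div_div]
          rw [div_le_div_iff₀ (by positivity) (by positivity)]
          have hf1 : (1:ℝ) ≤ (m.factorial : ℝ) := by exact_mod_cast m.factorial_pos
          have hA : (0:ℝ) ≤ (x^2)^m := by positivity
          have h4 : (0:ℝ) < 4^m := by positivity
          have hm0 : (0:ℝ) ≤ (m:ℝ) := Nat.cast_nonneg m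
          have h1 : (m:ℝ) * (m.factorial : ℝ) ≤ ((m:ℝ)+1) * ((m.factorial):ℝ)^2 := by
            have e1 : ((m:ℝ)+1) * (m.factorial:ℝ) * 1 ≤ ((m:ℝ)+1) * (m.factorial:ℝ) * (m.factorial:ℝ) :=
              mul_le_mul_of_nonneg_left hf1 (by positivity)
            have e2 : (m:ℝ) * (m.factorial:ℝ) ≤ ((m:ℝ)+1) * (m.factorial:ℝ) :=
              mul_le_mul_of_nonneg_right (by linarith) (by positivity)
            nlinarith [e1, e2]
          nlinarith [mul_le_mul_of_nonneg_left h1 (mul_nonneg hA h4.le), hA, h4]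
        have hgs : Summable g := by
          apply Summable.of_abs
          exact Summable.of_nonneg_of_le (fun m => abs_nonneg _) hbound
            (Real.summable_pow_div_factorial (x^2/4))
        rw [hgs.tsum_eq_zero_add]
        have hg0 : g 0 = 0 := by simp [hg]
        rw [hg0, zero_add]
        apply tsum_congr
        intro k
        simp only [hg]
        have h1 : ((k:ℝ)+1+1) ≠ 0 := by positivity
        have h2 : ((k.factorial : ℝ)) ≠ 0 := by positivity
        have h4 : ((4:ℝ)^k) ≠ 0 := by positivity
        rw [show (k+1).factorial = (k+1) * k.factorial from Nat.factorial_succ k,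
          show (k+2).factorial = (k+2) * ((k+1) * k.factorial) from by
            rw [Nat.factorial_succ, Nat.factorial_succ]]
        push_cast
        rw [show ((-1:ℝ))^(k+1) = -(-1:ℝ)^k from by ring, div_pow,
          show (2*(k+1)) = 2*k+2 from by ring,
          show (4:ℝ)^(k+1) = 2^(2*(k+1)) from by
            rw [show (4:ℝ) = 2^2 from by norm_num, ← pow_mul]]
        rw [show (2*(k+1)) = 2*k+2 from by ring]
        field_simp
        ring

lemma integral_pow_mul_exp_neg_mul (n : ℕ) {r : ℝ} (hr : 0 < r) :
    ∫ t in Set.Ioi (0:ℝ), t^n * Real.exp (-(r*t)) = n.factorial / r^(n+1) := by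
  have h := Real.integral_rpow_mul_exp_neg_mul_Ioi (a := (n:ℝ)+1) (r := r) (by positivity) hr
  rw [show ((n:ℝ)+1-1) = (n:ℝ) by ring] at h
  have heq : Set.EqOn (fun t : ℝ => t ^ (n:ℝ) * Real.exp (-(r*t)))
      (fun t : ℝ => t^n * Real.exp (-(r*t))) (Set.Ioi 0) := by
    intro t _
    simp [Real.rpow_natCast]
  rw [setIntegral_congr_fun measurableSet_Ioi heq] at h
  have hG : Real.Gamma ((n:ℝ)+1) = n.factorial := by
    exact_mod_cast Real.Gamma_nat_eq_factorial n
  have hp : ((1:ℝ)/r) ^ ((n:ℝ)+1) = (1/r)^(n+1 : ℕ) := by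
    rw [show ((n:ℝ)+1) = ((n+1 : ℕ):ℝ) by push_cast; ring, Real.rpow_natCast]
  rw [h, hG, hp, div_pow, one_pow]
  ring

lemma gaussian_moment (n : ℕ) {s : ℝ} (hs : 0 < s) :
    ∫ R in Set.Ioi (0:ℝ), R^(2*n+1) * Real.exp (-(s*R^2)) = n.factorial / (2 * s^(n+1)) := by
  have himg : (fun R : ℝ => R^2) '' Set.Ioi 0 = Set.Ioi 0 := by
    ext y
    constructor
    · rintro ⟨x, hx, rfl⟩; exact pow_pos (Set.mem_Ioi.mp hx) 2
    · intro hy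
      exact ⟨Real.sqrt y, Real.sqrt_pos.2 hy, Real.sq_sqrt (le_of_lt hy)⟩
  have hderiv : ∀ x ∈ Set.Ioi (0:ℝ), HasDerivWithinAt (fun R : ℝ => R^2) (2*x) (Set.Ioi 0) x := by
    intro x _
    simpa using (hasDerivAt_pow 2 x).hasDerivWithinAt
  have hinj : Set.InjOn (fun R : ℝ => R^2) (Set.Ioi 0) := by
    intro x hx y hy h
    simp only [Set.mem_Ioi] at hx hy
    have h' : x^2 = y^2 := h
    nlinarith [h', hx, hy]
  have key := MeasureTheory.integral_image_eq_integral_abs_deriv_smul measurableSet_Ioi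
    hderiv hinj (fun t => t^n * Real.exp (-(s*t)))
  rw [himg, integral_pow_mul_exp_neg_mul n hs] at key
  have heq : Set.EqOn (fun x : ℝ => |2*x| • ((x^2)^n * Real.exp (-(s*x^2))))
      (fun x : ℝ => 2 * (x^(2*n+1) * Real.exp (-(s*x^2)))) (Set.Ioi 0) := by
    intro x hx
    simp only [Set.mem_Ioi] at hx
    simp only [smul_eq_mul, abs_of_pos (by linarith : (0:ℝ) < 2*x), ← pow_mul]
    ring
  rw [setIntegral_congr_fun measurableSet_Ioi heq, MeasureTheory.integral_const_mul] at key
  have hs' : (s:ℝ)^(n+1) ≠ 0 := by positivity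
  field_simp at key ⊢
  linarith

lemma real_exp_tsum (y : ℝ) : Real.exp y = ∑' n : ℕ, y^n / n.factorial := by
  rw [Real.exp_eq_exp_ℝ, NormedSpace.exp_eq_tsum_div]

lemma integrable_pow_gauss (n : ℕ) {s : ℝ} (hs : 0 < s) :
    IntegrableOn (fun R : ℝ => R^n * Real.exp (-(s*R^2))) (Set.Ioi 0) := by
  have hn : (-1:ℝ) < n := by
    have := Nat.cast_nonneg (α := ℝ) n
    linarith
  have h := integrableOn_rpow_mul_exp_neg_mul_sq hs hn
  apply h.congr_fun ?_ measurableSet_Ioi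
  intro R hR
  simp only [Set.mem_Ioi] at hR
  show R ^ ((n:ℝ)) * Real.exp (-s * R^2) = R^n * Real.exp (-(s*R^2))
  rw [Real.rpow_natCast, neg_mul]

set_option maxHeartbeats 1000000 in
lemma weber {s a : ℝ} (hs : 0 < s) (J2 : ℝ → ℝ)
    (hser : ∀ x : ℝ, J2 x = ∑' k : ℕ, (-1)^k * (x/2)^(2*k+2) / ((k.factorial : ℝ) * ((k+2).factorial))) :
    ∫ R in Set.Ioi (0:ℝ), R^3 * Real.exp (-(s*R^2)) * J2 (a*R)
      = a^2 / (8*s^3) * Real.exp (-(a^2/(4*s))) := by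
  have hs0 : s ≠ 0 := ne_of_gt hs
  set c : ℕ → ℝ := fun k => (-1)^k * (a^2)^(k+1) / (4^(k+1) * k.factorial * (k+2).factorial) with hc
  set G : ℕ → ℝ → ℝ := fun k R => c k * (R^(2*(k+2)+1) * Real.exp (-(s*R^2))) with hG
  have scalar : ∀ k : ℕ, (a^2)^(k+1) / (4^(k+1) * (k.factorial:ℝ) * ((k+2).factorial:ℝ))
      * (((k+2).factorial:ℝ) / (2*s^(k+2+1)))
      = (a^2/(4*s))^k / (k.factorial:ℝ) * (a^2/(8*s^3)) := by
    intro k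
    have hfk : ((k.factorial : ℝ)) ≠ 0 := by positivity
    have hfk2 : (((k+2).factorial : ℝ)) ≠ 0 := by positivity
    have h4 : ((4:ℝ)^k) ≠ 0 := by positivity
    have hsk : (s:ℝ)^k ≠ 0 := pow_ne_zero _ hs0
    rw [div_pow, mul_pow, pow_succ (a^2) k, pow_succ (4:ℝ) k,
      show k+2+1 = k+3 from rfl, pow_add s k 3]
    field_simp
    ring
  have hpt : ∀ R : ℝ, R^3 * Real.exp (-(s*R^2)) * J2 (a*R) = ∑' k : ℕ, G k R := by
    intro R
    rw [hser (a*R), ← tsum_mul_left]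
    apply tsum_congr
    intro k
    simp only [hG, hc]
    have hfk : ((k.factorial : ℝ)) ≠ 0 := by positivity
    have hfk2 : (((k+2).factorial : ℝ)) ≠ 0 := by positivity
    have h1 : (a^2)^(k+1) = a^(2*k+2) := by
      rw [← pow_mul, show 2*(k+1) = 2*k+2 from by ring]
    have h2 : ((4:ℝ))^(k+1) = 2^(2*k+2) := by
      rw [show (4:ℝ) = 2^2 from by norm_num, ← pow_mul, show 2*(k+1) = 2*k+2 from by ring]
    have e1 : (a*R/2)^(2*k+2) = (a^2)^(k+1) * R^(2*k+2) / 4^(k+1) := by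
      rw [h1, h2, div_pow, mul_pow]
    rw [e1]
    have h4 : ((4:ℝ)^(k+1)) ≠ 0 := by positivity
    field_simp
    ring
  have hGint : ∀ k : ℕ, Integrable (G k) (volume.restrict (Set.Ioi 0)) := by
    intro k
    exact ((integrable_pow_gauss (2*(k+2)+1) hs).const_mul (c k))
  have hnorm : ∀ k : ℕ, (∫ R in Set.Ioi (0:ℝ), ‖G k R‖)
      = ((a^2/(4*s))^k / k.factorial) * (a^2/(8*s^3)) := by
    intro k
    have habs : ∀ R ∈ Set.Ioi (0:ℝ), ‖G k R‖
        = |c k| * (R^(2*(k+2)+1) * Real.exp (-(s*R^2))) := by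
      intro R hR
      simp only [Set.mem_Ioi] at hR
      rw [Real.norm_eq_abs, abs_mul, abs_of_pos (mul_pos (pow_pos hR _) (Real.exp_pos _))]
    rw [setIntegral_congr_fun measurableSet_Ioi habs, MeasureTheory.integral_const_mul,
      gaussian_moment (k+2) hs]
    have hck : |c k| = (a^2)^(k+1) / (4^(k+1) * k.factorial * (k+2).factorial) := by
      rw [hc]
      show |(-1:ℝ)^k * (a^2)^(k+1) / (4^(k+1) * (k.factorial:ℝ) * ((k+2).factorial:ℝ))| = _
      rw [abs_div, abs_mul, abs_pow, abs_neg, abs_one, one_pow, one_mul,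
        abs_of_nonneg (by positivity : (0:ℝ) ≤ (a^2)^(k+1)), abs_of_pos (by positivity)]
    rw [hck, scalar k]
  have hsum : Summable (fun k : ℕ => ∫ R in Set.Ioi (0:ℝ), ‖G k R‖) := by
    simp_rw [hnorm]
    exact (Real.summable_pow_div_factorial (a^2/(4*s))).mul_right _
  have hswap := MeasureTheory.integral_tsum_of_summable_integral_norm hGint hsum
  have hL : ∫ R in Set.Ioi (0:ℝ), R^3 * Real.exp (-(s*R^2)) * J2 (a*R)
      = ∫ R in Set.Ioi (0:ℝ), ∑' k : ℕ, G k R :=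
    integral_congr_ae (Filter.Eventually.of_forall (fun R => hpt R))
  rw [hL, ← hswap]
  have hterm : ∀ k : ℕ, (∫ R in Set.Ioi (0:ℝ), G k R)
      = ((-(a^2/(4*s)))^k / k.factorial) * (a^2/(8*s^3)) := by
    intro k
    simp only [hG]
    rw [MeasureTheory.integral_const_mul, gaussian_moment (k+2) hs, hc]
    show (-1:ℝ)^k * (a^2)^(k+1) / (4^(k+1) * (k.factorial:ℝ) * ((k+2).factorial:ℝ))
        * (((k+2).factorial:ℝ) / (2*s^(k+2+1))) = _
    rw [show (-(a^2/(4*s)))^k = (-1)^k * (a^2/(4*s))^k from by rw [neg_pow]]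
    have e : (-1:ℝ)^k * (a^2)^(k+1) / (4^(k+1) * (k.factorial:ℝ) * ((k+2).factorial:ℝ))
        = (-1:ℝ)^k * ((a^2)^(k+1) / (4^(k+1) * (k.factorial:ℝ) * ((k+2).factorial:ℝ))) := by
      ring
    rw [e, mul_assoc, scalar k]
    ring
  simp_rw [hterm]
  rw [tsum_mul_right, ← real_exp_tsum (-(a^2/(4*s)))]
  ring

lemma mul_exp_neg_le {c x : ℝ} (hc : 0 < c) (hx : 0 ≤ x) : x * Real.exp (-(c*x)) ≤ 1/c := by
  have h1 : c*x ≤ Real.exp (c*x) := by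
    have := Real.add_one_le_exp (c*x)
    linarith
  rw [Real.exp_neg, mul_comm, inv_mul_eq_div, div_le_div_iff₀ (Real.exp_pos _) hc]
  nlinarith [h1]

lemma cosh_ge_half_exp (t : ℝ) : Real.exp t / 2 ≤ Real.cosh t := by
  rw [Real.cosh_eq]
  have := Real.exp_pos (-t)
  linarith

lemma cosh_ge_half_exp_neg (t : ℝ) : Real.exp (-t) / 2 ≤ Real.cosh t := by
  rw [Real.cosh_eq]
  have := Real.exp_pos t
  linarith

-- integrability of exp(t) * exp(-a cosh t) on Ioi 0
lemma integrable_exp_mul_exp_neg_cosh {a : ℝ} (ha : 0 < a) :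
    IntegrableOn (fun t : ℝ => Real.exp t * Real.exp (-(a * Real.cosh t))) (Set.Ioi 0) := by
  apply Integrable.mono' ((exp_neg_integrableOn_Ioi 0 (by positivity : 0 < a/4)).const_mul ((4/a) * Real.exp (-(a/4))))
  · apply ((Real.continuous_exp).mul (by fun_prop)).aestronglyMeasurable
  · filter_upwards [MeasureTheory.ae_restrict_mem measurableSet_Ioi] with t ht
    simp only [Set.mem_Ioi] at ht
    rw [Real.norm_eq_abs, abs_of_pos (by positivity)]
    have h1 : Real.exp t * Real.exp (-(a * Real.cosh t)) ≤ Real.exp t * Real.exp (-((a/2) * Real.exp t)) := by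
      apply mul_le_mul_of_nonneg_left _ (Real.exp_pos t).le
      apply Real.exp_le_exp.2
      have := cosh_ge_half_exp t
      rw [neg_le_neg_iff]
      nlinarith [this]
    have h2 : Real.exp t * Real.exp (-((a/2) * Real.exp t))
        = (Real.exp t * Real.exp (-((a/4) * Real.exp t))) * Real.exp (-((a/4) * Real.exp t)) := by
      rw [← Real.exp_add, ← Real.exp_add, ← Real.exp_add]
      congr 1
      ring
    have h3 : Real.exp t * Real.exp (-((a/4) * Real.exp t)) ≤ 4/a :=
      le_trans (mul_exp_neg_le (by positivity) (Real.exp_pos t).le) (by rw [one_div_div])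
    have h4 : Real.exp (-((a/4) * Real.exp t)) ≤ Real.exp (-(a/4)) * Real.exp (-(a/4)*t) := by
      rw [← Real.exp_add]
      apply Real.exp_le_exp.2
      have het : 1 + t ≤ Real.exp t := by
        have := Real.add_one_le_exp t
        linarith
      nlinarith [het]
    calc Real.exp t * Real.exp (-(a * Real.cosh t))
        ≤ (Real.exp t * Real.exp (-((a/4) * Real.exp t))) * Real.exp (-((a/4) * Real.exp t)) := by
          rw [← h2]; exact h1
      _ ≤ (4/a) * (Real.exp (-(a/4)) * Real.exp (-(a/4)*t)) := by
          apply mul_le_mul h3 h4 (Real.exp_pos _).le (by positivity)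
      _ = 4/a * Real.exp (-(a/4)) * Real.exp (-(a/4)*t) := by ring

lemma integrable_exp_neg_mul_exp_neg_cosh {a : ℝ} (ha : 0 < a) :
    IntegrableOn (fun t : ℝ => Real.exp (-t) * Real.exp (-(a * Real.cosh t))) (Set.Ioi 0) := by
  apply Integrable.mono' (exp_neg_integrableOn_Ioi 0 (one_pos))
  · exact ((Real.continuous_exp.comp continuous_neg).mul (by fun_prop)).aestronglyMeasurable
  · filter_upwards [MeasureTheory.ae_restrict_mem measurableSet_Ioi] with t _
    rw [Real.norm_eq_abs, abs_of_pos (by positivity)]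
    calc Real.exp (-t) * Real.exp (-(a * Real.cosh t)) ≤ Real.exp (-t) * 1 := by
          apply mul_le_mul_of_nonneg_left _ (Real.exp_pos _).le
          rw [Real.exp_le_one_iff]
          have := Real.one_le_cosh t  -- hope exists
          nlinarith [this]
      _ = Real.exp (-t) := mul_one _
      _ = Real.exp (-1 * t) := by ring_nf

set_option maxHeartbeats 1000000 in
lemma K1_subst {a : ℝ} (ha : 0 < a) :
    ∫ s in Set.Ioi (0:ℝ), Real.exp (-s - a^2/(4*s))
      = a * ∫ t in Set.Ioi (0:ℝ), Real.exp (-(a * Real.cosh t)) * Real.cosh t := by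
  set F : ℝ → ℝ := fun s => Real.exp (-s - a^2/(4*s)) with hF
  have ha2 : (0:ℝ) < a/2 := by positivity
  -- piece 2 : Ioi (a/2)
  have himg2 : (fun t : ℝ => (a/2) * Real.exp t) '' Set.Ioi 0 = Set.Ioi (a/2) := by
    ext y
    constructor
    · rintro ⟨t, ht, rfl⟩
      simp only [Set.mem_Ioi] at *
      have h1 : 1 < Real.exp t := by
        rw [← Real.exp_zero]
        exact Real.exp_lt_exp.2 ht
      nlinarith
    · intro hy
      simp only [Set.mem_Ioi] at hy
      refine ⟨Real.log (2*y/a), ?_, ?_⟩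
      · simp only [Set.mem_Ioi]
        apply Real.log_pos
        rw [lt_div_iff₀ ha]
        linarith
      · have hy0 : (0:ℝ) < y := lt_trans ha2 hy
        show a/2 * Real.exp (Real.log (2*y/a)) = y
        rw [Real.exp_log (by positivity : (0:ℝ) < 2*y/a)]
        field_simp
  have hder2 : ∀ t ∈ Set.Ioi (0:ℝ), HasDerivWithinAt (fun t : ℝ => (a/2) * Real.exp t)
      ((a/2) * Real.exp t) (Set.Ioi 0) t :=
    fun t _ => ((Real.hasDerivAt_exp t).const_mul (a/2)).hasDerivWithinAt
  have hinj2 : Set.InjOn (fun t : ℝ => (a/2) * Real.exp t) (Set.Ioi 0) := by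
    intro t _ u _ h
    simp only at h
    have := mul_left_cancel₀ (ne_of_gt ha2) h
    exact Real.exp_injective this
  have key2 := MeasureTheory.integral_image_eq_integral_abs_deriv_smul measurableSet_Ioi
    hder2 hinj2 F
  rw [himg2] at key2
  have hptF : ∀ t : ℝ, F ((a/2) * Real.exp t) = Real.exp (-(a * Real.cosh t)) := by
    intro t
    simp only [hF]
    congr 1
    have he : Real.exp t ≠ 0 := ne_of_gt (Real.exp_pos t)
    rw [Real.cosh_eq, Real.exp_neg]
    field_simp
    ring
  have sub2 : ∫ s in Set.Ioi (a/2), F s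
      = ∫ t in Set.Ioi (0:ℝ), (a/2) * Real.exp t * Real.exp (-(a * Real.cosh t)) := by
    rw [key2]
    apply setIntegral_congr_fun measurableSet_Ioi
    intro t _
    simp only [smul_eq_mul]
    rw [hptF t, abs_of_pos (by positivity)]
  -- piece 1 : Ioo 0 (a/2)
  have himg1 : (fun t : ℝ => (a/2) * Real.exp (-t)) '' Set.Ioi 0 = Set.Ioo 0 (a/2) := by
    ext y
    constructor
    · rintro ⟨t, ht, rfl⟩
      simp only [Set.mem_Ioi] at ht
      constructor
      · positivity
      · have h1 : Real.exp (-t) < 1 := Real.exp_lt_one_iff.2 (by linarith)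
        nlinarith
    · intro hy
      obtain ⟨hy1, hy2⟩ := hy
      refine ⟨Real.log (a/(2*y)), ?_, ?_⟩
      · simp only [Set.mem_Ioi]
        apply Real.log_pos
        rw [lt_div_iff₀ (by positivity)]
        linarith
      · show a/2 * Real.exp (-(Real.log (a/(2*y)))) = y
        rw [← Real.log_inv, Real.exp_log (by positivity)]
        rw [show (a/(2*y))⁻¹ = 2*y/a from by field_simp]
        field_simp
  have hder1 : ∀ t ∈ Set.Ioi (0:ℝ), HasDerivWithinAt (fun t : ℝ => (a/2) * Real.exp (-t))
      (-((a/2) * Real.exp (-t))) (Set.Ioi 0) t := by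
    intro t _
    have h : HasDerivAt (fun t : ℝ => Real.exp (-t)) (-Real.exp (-t)) t := by
      simpa [Function.comp_def] using (Real.hasDerivAt_exp (-t)).comp t (hasDerivAt_neg t)
    simpa [mul_comm, neg_mul, mul_neg] using (h.const_mul (a/2)).hasDerivWithinAt
  have hinj1 : Set.InjOn (fun t : ℝ => (a/2) * Real.exp (-t)) (Set.Ioi 0) := by
    intro t _ u _ h
    simp only at h
    have := Real.exp_injective (mul_left_cancel₀ (ne_of_gt ha2) h)
    linarith [this]
  have key1 := MeasureTheory.integral_image_eq_integral_abs_deriv_smul measurableSet_Ioi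
    hder1 hinj1 F
  rw [himg1] at key1
  have hptF1 : ∀ t : ℝ, F ((a/2) * Real.exp (-t)) = Real.exp (-(a * Real.cosh t)) := by
    intro t
    simp only [hF]
    congr 1
    have he : Real.exp t ≠ 0 := ne_of_gt (Real.exp_pos t)
    rw [Real.cosh_eq, Real.exp_neg]
    field_simp
    ring
  have sub1 : ∫ s in Set.Ioc (0:ℝ) (a/2), F s
      = ∫ t in Set.Ioi (0:ℝ), (a/2) * Real.exp (-t) * Real.exp (-(a * Real.cosh t)) := by
    rw [integral_Ioc_eq_integral_Ioo, key1]
    apply setIntegral_congr_fun measurableSet_Ioi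
    intro t _
    simp only [smul_eq_mul]
    rw [hptF1 t, abs_neg, abs_of_pos (by positivity)]
  -- integrability of F on pieces
  have hFmeas : Measurable F :=
    (measurable_id.neg.sub (measurable_const.div (measurable_const.mul measurable_id))).exp
  have hFnonneg : ∀ s : ℝ, 0 < F s := fun s => Real.exp_pos _
  have hone : IntegrableOn (fun _ : ℝ => (1:ℝ)) (Set.Ioc (0:ℝ) (a/2)) :=
    integrableOn_const measure_Ioc_lt_top.ne
  have hint1 : IntegrableOn F (Set.Ioc 0 (a/2)) := by
    apply Integrable.mono' hone
    · exact hFmeas.aestronglyMeasurable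
    · filter_upwards [MeasureTheory.ae_restrict_mem measurableSet_Ioc] with s hs
      obtain ⟨hs1, _⟩ := hs
      rw [Real.norm_eq_abs, abs_of_pos (hFnonneg s)]
      simp only [hF]
      rw [Real.exp_le_one_iff]
      have : 0 < a^2/(4*s) := by positivity
      linarith
  have hint2 : IntegrableOn F (Set.Ioi (a/2)) := by
    apply Integrable.mono' ((exp_neg_integrableOn_Ioi (a/2) one_pos))
    · exact hFmeas.aestronglyMeasurable
    · filter_upwards [MeasureTheory.ae_restrict_mem measurableSet_Ioi] with s hs
      simp only [Set.mem_Ioi] at hs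
      have hs0 : 0 < s := lt_trans ha2 hs
      rw [Real.norm_eq_abs, abs_of_pos (hFnonneg s)]
      simp only [hF]
      rw [show (-1)*s = -s from by ring]
      apply Real.exp_le_exp.2
      have : 0 < a^2/(4*s) := by positivity
      linarith
  -- combine
  have hsplit : ∫ s in Set.Ioi (0:ℝ), F s
      = (∫ s in Set.Ioc (0:ℝ) (a/2), F s) + ∫ s in Set.Ioi (a/2), F s := by
    rw [← MeasureTheory.setIntegral_union (Set.Ioc_disjoint_Ioi le_rfl) measurableSet_Ioi
      hint1 hint2, Set.Ioc_union_Ioi_eq_Ioi ha2.le]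
  rw [hsplit, sub1, sub2]
  have hadd : (∫ t in Set.Ioi (0:ℝ), (a/2) * Real.exp (-t) * Real.exp (-(a * Real.cosh t)))
      + (∫ t in Set.Ioi (0:ℝ), (a/2) * Real.exp t * Real.exp (-(a * Real.cosh t)))
      = ∫ t in Set.Ioi (0:ℝ), a * (Real.exp (-(a * Real.cosh t)) * Real.cosh t) := by
    rw [← MeasureTheory.integral_add]
    · apply setIntegral_congr_fun measurableSet_Ioi
      intro t _
      dsimp only
      rw [Real.cosh_eq]
      ring
    · exact (integrable_exp_neg_mul_exp_neg_cosh ha).const_mul (a/2) |>.congr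
        (Filter.Eventually.of_forall (fun t => by ring))
    · exact (integrable_exp_mul_exp_neg_cosh ha).const_mul (a/2) |>.congr
        (Filter.Eventually.of_forall (fun t => by ring))
  rw [hadd, MeasureTheory.integral_const_mul]


lemma besselJ2_serJ (x : ℝ) :
    besselJ 2 x = ∑' k : ℕ, (-1)^k * (x/2)^(2*k+2) / ((k.factorial : ℝ) * ((k+2).factorial)) :=
  (besselJ_two_eq x).trans (besselJ2_series x)

lemma besselJ2_continuous : Continuous (besselJ 2) :=
  besselJ2_cont.congr (fun x => (besselJ_two_eq x).symm)

lemma besselJ2_abs_le (x : ℝ) : |besselJ 2 x| ≤ 1 := by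
  rw [besselJ_two_eq]
  exact abs_besselJ2_le x

lemma integrable_pow_mul_exp_neg_mul (n : ℕ) {r : ℝ} (hr : 0 < r) :
    IntegrableOn (fun t : ℝ => t^n * Real.exp (-(r*t))) (Set.Ioi 0) := by
  have hn : (-1:ℝ) < n := by
    have := Nat.cast_nonneg (α := ℝ) n
    linarith
  have h := integrableOn_rpow_mul_exp_neg_mul_rpow hn one_pos hr
  apply h.congr_fun ?_ measurableSet_Ioi
  intro t ht
  simp only [Set.mem_Ioi] at ht
  show t ^ ((n:ℝ)) * Real.exp (-r * t ^ (1:ℝ)) = t^n * Real.exp (-(r*t))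
  rw [Real.rpow_natCast, Real.rpow_one, neg_mul]

lemma integrable_R3 : IntegrableOn (fun R : ℝ => R^3/(1+R^2)^4) (Set.Ioi 0) := by
  apply Integrable.mono' (integrable_inv_one_add_sq.integrableOn (s := Set.Ioi 0))
  · apply Continuous.aestronglyMeasurable
    exact (continuous_pow 3).div (by fun_prop) (fun R => by positivity)
  · filter_upwards [MeasureTheory.ae_restrict_mem measurableSet_Ioi] with R hR
    simp only [Set.mem_Ioi] at hR
    rw [Real.norm_eq_abs, abs_of_pos (by positivity)]
    have h1 : R ≤ 1 + R^2 := by nlinarith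
    have h3 : R^3 ≤ (1+R^2)^3 := pow_le_pow_left₀ hR.le h1 3
    calc R^3/(1+R^2)^4 ≤ (1+R^2)^3/(1+R^2)^4 := by gcongr
      _ = ((1:ℝ)+R^2)⁻¹ := by
          rw [pow_succ]
          field_simp

set_option maxHeartbeats 2000000 in
theorem hankel_transform_identity (lam ξ : ℝ) (hlam : 0 < lam) (hξ : 0 < ξ) :
    (24 / lam^2) * ∫ R in Set.Ioi (0:ℝ), R^3 * besselJ 2 (ξ * R * lam) / (1 + R^2)^4
      = (ξ^3 * lam / 2) * besselK1 (ξ * lam) := by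
  set a : ℝ := ξ * lam with haeq
  have ha : 0 < a := mul_pos hξ hlam
  -- rewrite the argument
  have harg : ∀ R : ℝ, ξ * R * lam = a * R := fun R => by rw [haeq]; ring
  set g : ℝ → ℝ → ℝ :=
    fun R s => R^3 * besselJ 2 (a*R) * (s^3 * Real.exp (-((1+R^2)*s))) with hg
  have hgc : Continuous (Function.uncurry g) := by
    apply Continuous.mul
    · apply Continuous.mul
      · exact (continuous_pow 3).comp continuous_fst
      · exact besselJ2_continuous.comp (continuous_const.mul continuous_fst)
    · apply Continuous.mul
      · exact (continuous_pow 3).comp continuous_snd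
      · exact Real.continuous_exp.comp (by fun_prop)
  -- inner representation of the weight
  have hinner : ∀ R : ℝ, R^3 * besselJ 2 (a*R) / (1+R^2)^4
      = (1/6) * ∫ s in Set.Ioi (0:ℝ), g R s := by
    intro R
    have h1 : (0:ℝ) < 1+R^2 := by positivity
    have : (∫ s in Set.Ioi (0:ℝ), g R s)
        = (R^3 * besselJ 2 (a*R)) * ∫ s in Set.Ioi (0:ℝ), s^3 * Real.exp (-((1+R^2)*s)) := by
      simp only [hg]
      rw [MeasureTheory.integral_const_mul]
    rw [this, integral_pow_mul_exp_neg_mul 3 h1]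
    have h2 : ((1:ℝ)+R^2)^4 ≠ 0 := by positivity
    rw [show ((Nat.factorial 3 : ℕ) : ℝ) = 6 from by norm_num [Nat.factorial]]
    field_simp
  -- sections in s are integrable
  have hsec : ∀ R : ℝ, Integrable (fun s => g R s) (volume.restrict (Set.Ioi 0)) := by
    intro R
    simp only [hg]
    exact ((integrable_pow_mul_exp_neg_mul 3 (by positivity : (0:ℝ) < 1+R^2)).const_mul _)
  -- the norm-integral in s, computed
  have hnormint : ∀ R : ℝ, (∫ s in Set.Ioi (0:ℝ), ‖g R s‖)
      = |R^3 * besselJ 2 (a*R)| * (6 / (1+R^2)^4) := by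
    intro R
    have h1 : (0:ℝ) < 1+R^2 := by positivity
    have heq : ∀ s ∈ Set.Ioi (0:ℝ), ‖g R s‖
        = |R^3 * besselJ 2 (a*R)| * (s^3 * Real.exp (-((1+R^2)*s))) := by
      intro s hs
      simp only [Set.mem_Ioi] at hs
      show |R^3 * besselJ 2 (a*R) * (s^3 * Real.exp (-((1+R^2)*s)))| = _
      rw [abs_mul, abs_of_pos (by positivity : (0:ℝ) < s^3 * Real.exp (-((1+R^2)*s)))]
    rw [setIntegral_congr_fun measurableSet_Ioi heq, MeasureTheory.integral_const_mul,
      integral_pow_mul_exp_neg_mul 3 h1]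
    rw [show ((Nat.factorial 3 : ℕ) : ℝ) = 6 from by norm_num [Nat.factorial]]
  -- integrability on the product
  have hprod : Integrable (Function.uncurry g)
      ((volume.restrict (Set.Ioi 0)).prod (volume.restrict (Set.Ioi 0))) := by
    rw [MeasureTheory.integrable_prod_iff hgc.aestronglyMeasurable]
    constructor
    · exact Filter.Eventually.of_forall (fun R => hsec R)
    · apply Integrable.mono' (integrable_R3.const_mul 6)
      · exact (hgc.aestronglyMeasurable.norm).integral_prod_right'
      · filter_upwards [MeasureTheory.ae_restrict_mem measurableSet_Ioi] with R hR
        simp only [Set.mem_Ioi] at hR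
        simp only [Function.uncurry_apply_pair]
        rw [Real.norm_eq_abs]
        have h0 : (0:ℝ) ≤ ∫ s in Set.Ioi (0:ℝ), ‖g R s‖ :=
          integral_nonneg (fun s => norm_nonneg _)
        rw [abs_of_nonneg h0, hnormint R]
        have hb : |R^3 * besselJ 2 (a*R)| ≤ R^3 := by
          rw [abs_mul, abs_of_pos (by positivity : (0:ℝ) < R^3)]
          calc R^3 * |besselJ 2 (a*R)| ≤ R^3 * 1 :=
                mul_le_mul_of_nonneg_left (besselJ2_abs_le _) (by positivity)
            _ = R^3 := mul_one _
        calc |R^3 * besselJ 2 (a*R)| * (6/(1+R^2)^4) ≤ R^3 * (6/(1+R^2)^4) :=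
              mul_le_mul_of_nonneg_right hb (by positivity)
          _ = 6 * (R^3/(1+R^2)^4) := by ring
  -- Fubini
  have hfub : ∫ R in Set.Ioi (0:ℝ), ∫ s in Set.Ioi (0:ℝ), g R s
      = ∫ s in Set.Ioi (0:ℝ), ∫ R in Set.Ioi (0:ℝ), g R s :=
    MeasureTheory.integral_integral_swap hprod
  -- inner R-integral via Weber
  have hweber : ∀ s ∈ Set.Ioi (0:ℝ), (∫ R in Set.Ioi (0:ℝ), g R s)
      = (a^2/8) * Real.exp (-s - a^2/(4*s)) := by
    intro s hs
    simp only [Set.mem_Ioi] at hs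
    have hexp : ∀ R : ℝ, g R s = (s^3 * Real.exp (-s)) * (R^3 * Real.exp (-(s*R^2)) * besselJ 2 (a*R)) := by
      intro R
      simp only [hg]
      rw [show -((1+R^2)*s) = (-s) + (-(s*R^2)) from by ring, Real.exp_add]
      ring
    rw [MeasureTheory.integral_congr_ae (Filter.Eventually.of_forall (fun R => hexp R)),
      MeasureTheory.integral_const_mul, weber hs (besselJ 2) besselJ2_serJ]
    have hs3 : (s:ℝ)^3 ≠ 0 := by positivity
    rw [show -s - a^2/(4*s) = (-s) + (-(a^2/(4*s))) from by ring, Real.exp_add]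
    field_simp
  -- put it together
  calc (24 / lam^2) * ∫ R in Set.Ioi (0:ℝ), R^3 * besselJ 2 (ξ * R * lam) / (1 + R^2)^4
      = (24 / lam^2) * ∫ R in Set.Ioi (0:ℝ), (1/6) * ∫ s in Set.Ioi (0:ℝ), g R s := by
        congr 1
        apply MeasureTheory.integral_congr_ae (Filter.Eventually.of_forall (fun R => ?_))
        rw [harg R, hinner R]
    _ = (24 / lam^2) * ((1/6) * ∫ R in Set.Ioi (0:ℝ), ∫ s in Set.Ioi (0:ℝ), g R s) := by
        rw [MeasureTheory.integral_const_mul]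
    _ = (24 / lam^2) * ((1/6) * ∫ s in Set.Ioi (0:ℝ), (a^2/8) * Real.exp (-s - a^2/(4*s))) := by
        rw [hfub, setIntegral_congr_fun measurableSet_Ioi hweber]
    _ = (24 / lam^2) * ((1/6) * ((a^2/8) * (a * besselK1 a))) := by
        have hK : (∫ t in Set.Ioi (0:ℝ), Real.exp (-(a * Real.cosh t)) * Real.cosh t)
            = besselK1 a := by
          unfold besselK1
          apply setIntegral_congr_fun measurableSet_Ioi
          intro t _
          simp only [neg_mul]
        rw [MeasureTheory.integral_const_mul, K1_subst ha, hK]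
    _ = (ξ^3 * lam / 2) * besselK1 (ξ * lam) := by
        rw [haeq]
        have hl : lam ≠ 0 := ne_of_gt hlam
        field_simp
        ring
end

section
/- For all real r, ρ > 0 with r ≠ ρ: ∫₀^π sin⁴(φ)/(ρ² + r² + 2rρcos(φ)) dφ = -π(min{r,ρ}² - 3max{r,ρ}²)/(8 max{r,ρ}⁴). -/
open Real intervalIntegral

/-- Key computation: for `0 < b < a` and `s > 0` with `s^2 = a^2 - b^2`,
`∫₀^π sin⁴ φ / (a + b cos φ) dφ = π (3a/(2b²) - a³/b⁴ + s³/b⁴)`. -/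
lemma sin_pow_four_key (a b s : ℝ) (hb : 0 < b) (hs : 0 < s) (hab : b < a)
    (hs2 : s^2 = a^2 - b^2) :
    ∫ φ in (0:ℝ)..Real.pi, (Real.sin φ)^4 / (a + b*Real.cos φ)
      = Real.pi * (3*a/(2*b^2) - a^3/b^4 + s^3/b^4) := by
  have ha : 0 < a := hb.trans hab
  have hbne : b ≠ 0 := hb.ne'
  have hden : ∀ φ : ℝ, 0 < a + b*Real.cos φ := by
    intro φ
    nlinarith [Real.neg_one_le_cos φ]
  have hden2 : ∀ φ : ℝ, 0 < a + s + b*Real.cos φ := by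
    intro φ
    nlinarith [Real.neg_one_le_cos φ]
  set F : ℝ → ℝ := fun φ =>
    (1/b)*(Real.sin φ - (Real.sin φ)^3/3) - (a/b^2)*(φ/2 + Real.sin φ*Real.cos φ/2)
      + (a^2/b^3 - 2/b)*Real.sin φ + (2*a/b^2 - a^3/b^4)*φ
      + (s^3/b^4)*(φ - 2*Real.arctan (b*Real.sin φ/(a + s + b*Real.cos φ))) with hF
  have hderiv : ∀ x : ℝ, HasDerivAt F ((Real.sin x)^4 / (a + b*Real.cos x)) x := by
    intro x
    have hsin := Real.hasDerivAt_sin x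
    have hcos := Real.hasDerivAt_cos x
    have hsc : (Real.sin x)^2 = 1 - (Real.cos x)^2 := Real.sin_sq x
    have hd1 : a + b*Real.cos x ≠ 0 := (hden x).ne'
    have hd2 : a + s + b*Real.cos x ≠ 0 := (hden2 x).ne'
    have has : 0 < a + s := by linarith
    have h1 : HasDerivAt (fun φ => Real.sin φ - (Real.sin φ)^3/3) ((Real.cos x)^3) x := by
      have := hsin.sub ((hsin.pow 3).div_const 3)
      refine this.congr_deriv ?_
      simp only [Nat.cast_ofNat]
      linear_combination (-Real.cos x) * hsc
    have h2 : HasDerivAt (fun φ : ℝ => φ/2 + Real.sin φ*Real.cos φ/2) ((Real.cos x)^2) x := by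
      have := ((hasDerivAt_id x).div_const 2).add ((hsin.mul hcos).div_const 2)
      refine this.congr_deriv ?_
      linear_combination (-1/2 : ℝ) * hsc
    have hg : HasDerivAt (fun φ => b*Real.sin φ/(a + s + b*Real.cos φ))
        ((b*Real.cos x*(a + s + b*Real.cos x) - b*Real.sin x*(b*(-Real.sin x)))
          /(a + s + b*Real.cos x)^2) x :=
      (hsin.const_mul b).div ((hcos.const_mul b).const_add (a+s)) hd2
    have h5 : HasDerivAt (fun φ => φ - 2*Real.arctan (b*Real.sin φ/(a + s + b*Real.cos φ)))
        (s/(a + b*Real.cos x)) x := by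
      have := (hasDerivAt_id x).sub ((hg.arctan).const_mul 2)
      refine this.congr_deriv ?_
      have hsum : (a + s + b*Real.cos x)^2 + (b*Real.sin x)^2
          = 2*(a+s)*(a + b*Real.cos x) := by
        linear_combination b^2 * hsc + hs2
      have hpos : (0:ℝ) < 1 + (b*Real.sin x/(a + s + b*Real.cos x))^2 := by positivity
      have k1 : 1 + (b*Real.sin x/(a + s + b*Real.cos x))^2
          = 2*(a+s)*(a + b*Real.cos x)/(a + s + b*Real.cos x)^2 := by
        rw [div_pow, ← hsum]; field_simp
      have k2 : b*Real.cos x*(a + s + b*Real.cos x) - b*Real.sin x*(b*(-Real.sin x))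
          = b*(Real.cos x*(a+s) + b) := by
        linear_combination b^2 * hsc
      rw [k1, k2]
      have has' : a + s ≠ 0 := has.ne'
      field_simp
      linear_combination -hs2
    have hT : HasDerivAt F
        ((1/b)*((Real.cos x)^3) - (a/b^2)*((Real.cos x)^2)
          + (a^2/b^3 - 2/b)*Real.cos x + (2*a/b^2 - a^3/b^4)*1
          + (s^3/b^4)*(s/(a + b*Real.cos x))) x := by
      exact ((((h1.const_mul (1/b)).sub (h2.const_mul (a/b^2))).add
        (hsin.const_mul (a^2/b^3 - 2/b))).add
        ((hasDerivAt_id x).const_mul (2*a/b^2 - a^3/b^4))).add (h5.const_mul (s^3/b^4))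
    convert hT using 1
    have h4 : (Real.sin x)^4 = (1 - (Real.cos x)^2)^2 := by
      linear_combination ((Real.sin x)^2 + 1 - (Real.cos x)^2) * hsc
    rw [h4]
    have e : (s^3/b^4)*(s/(a + b*Real.cos x)) = (a^2-b^2)^2/b^4/(a + b*Real.cos x) := by
      rw [← hs2]; ring
    rw [e]
    rw [div_eq_iff hd1, add_mul _ _ (a + b*Real.cos x), div_mul_cancel₀ _ hd1]
    field_simp
    ring
  have hint : IntervalIntegrable (fun φ => (Real.sin φ)^4 / (a + b*Real.cos φ))
      MeasureTheory.volume 0 Real.pi := by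
    apply Continuous.intervalIntegrable
    exact (Real.continuous_sin.pow 4).div
      (continuous_const.add (continuous_const.mul Real.continuous_cos))
      (fun φ => (hden φ).ne')
  rw [intervalIntegral.integral_eq_sub_of_hasDerivAt (fun x _ => hderiv x) hint]
  simp only [hF, Real.sin_pi, Real.sin_zero, Real.cos_pi, Real.cos_zero]
  norm_num [Real.arctan_zero]
  ring

theorem sin_pow_four_residue_integral (r ρ : ℝ) (hr : 0 < r) (hρ : 0 < ρ) (hne : r ≠ ρ) :
    ∫ φ in (0:ℝ)..Real.pi, (Real.sin φ)^4 / (ρ^2 + r^2 + 2*r*ρ*Real.cos φ)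
      = -Real.pi * ((min r ρ)^2 - 3 * (max r ρ)^2) / (8 * (max r ρ)^4) := by
  rcases lt_or_gt_of_ne hne with h | h
  · -- r < ρ
    rw [min_eq_left h.le, max_eq_right h.le]
    have key := sin_pow_four_key (ρ^2 + r^2) (2*r*ρ) (ρ^2 - r^2)
      (by positivity) (by nlinarith) (by nlinarith) (by ring)
    rw [key]
    have hρ4 : ρ ≠ 0 := hρ.ne'
    have hr0 : r ≠ 0 := hr.ne'
    field_simp
    ring
  · -- ρ < r
    rw [min_eq_right h.le, max_eq_left h.le]
    have hsym : ∀ φ : ℝ, ρ^2 + r^2 + 2*r*ρ*Real.cos φ = r^2 + ρ^2 + 2*ρ*r*Real.cos φ := by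
      intro φ; ring
    simp_rw [hsym]
    have key := sin_pow_four_key (r^2 + ρ^2) (2*ρ*r) (r^2 - ρ^2)
      (by positivity) (by nlinarith) (by nlinarith) (by ring)
    rw [key]
    have hρ4 : ρ ≠ 0 := hρ.ne'
    have hr0 : r ≠ 0 := hr.ne'
    field_simp
    ring
end

section
/- For all r, ρ > 0 and θ ∈ (0, 2π) with r² + ρ² + 2rρcos(θ) > 0: (ρ + r)(1 + cos θ) / ((r - ρ)² + 2rρ(1 + cos θ)) ≤ C / max{r, ρ} for an absolute constant C. -/
theorem null_derivative_gain :
    ∃ C > 0, ∀ r ρ θ : ℝ, 0 < r → 0 < ρ → θ ∈ Set.Ioo 0 (2*Real.pi) →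
      (ρ + r) * (1 + Real.cos θ) / ((r - ρ)^2 + 2*r*ρ*(1 + Real.cos θ))
        ≤ C / max r ρ := by
  refine ⟨2, two_pos, fun r ρ θ hr hρ hθ => ?_⟩
  have hc1 : -1 ≤ Real.cos θ := Real.neg_one_le_cos θ
  have hc2 : Real.cos θ ≤ 1 := Real.cos_le_one θ
  have hs0 : 0 ≤ 1 + Real.cos θ := by linarith
  have hmax : 0 < max r ρ := lt_max_of_lt_left hr
  have hden0 : 0 ≤ (r - ρ)^2 + 2*r*ρ*(1 + Real.cos θ) := by positivity
  rcases eq_or_lt_of_le hden0 with h | h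
  · rw [← h, div_zero]
    positivity
  · rw [div_le_div_iff₀ h hmax]
    have hmle : max r ρ ≤ r + ρ := max_le (by linarith) (by linarith)
    nlinarith [mul_nonneg (mul_nonneg (by linarith : (0:ℝ) ≤ ρ + r) hs0) (sub_nonneg.2 hmle),
      mul_nonneg (sq_nonneg (r - ρ)) (by linarith : 0 ≤ 1 - Real.cos θ),
      mul_pos hr hρ]
end
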